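/- Let n ≥ 1, A ∈ ℂ^{n×n} and δ > 0. Every point λ on the topological boundary ∂Spec_δ(A) of the δ-pseudospectrum satisfies s_n(λ) = δ, where s_n(λ) is the smallest singular value of λI − A. -/

import Mathlib

open Matrix

/-- The operator norm of a complex matrix, induced by the Euclidean norm on `ℂⁿ`. -/
noncomputable def l2OpNorm {ι : Type*} [Fintype ι] [DecidableEq ι]
    (E : Matrix ι ι ℂ) : ℝ :=
  ‖Matrix.toEuclideanCLM (𝕜 := ℂ) E‖

/-- The δ-pseudospectrum of a matrix. -/
noncomputable def pseudospectrum {ι : Type*} [Fintype ι] [DecidableEq ι]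
    (δ : ℝ) (A : Matrix ι ι ℂ) : Set ℂ :=
  ⋃ E ∈ {E : Matrix ι ι ℂ | l2OpNorm E ≤ δ}, spectrum ℂ (A + E)

/-- The smallest singular value of `λI - A`: the square root of the smallest
eigenvalue of the Hermitian matrix `(λI - A)ᴴ (λI - A)`. -/
noncomputable def sMin {n : ℕ} (A : Matrix (Fin n) (Fin n) ℂ) (lam : ℂ) : ℝ :=
  Real.sqrt (⨅ i, (Matrix.isHermitian_conjTranspose_mul_self
    (lam • (1 : Matrix (Fin n) (Fin n) ℂ) - A)).eigenvalues i)

namespace PseudoAux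

variable {n : ℕ}

lemma euclid_apply (M : Matrix (Fin n) (Fin n) ℂ) (x : EuclideanSpace ℂ (Fin n)) :
    Matrix.toEuclideanCLM (𝕜 := ℂ) M x = (WithLp.equiv 2 _).symm (M *ᵥ (WithLp.equiv 2 _ x)) := rfl

lemma norm_sq_eq (M : Matrix (Fin n) (Fin n) ℂ) (x : EuclideanSpace ℂ (Fin n)) :
    ‖Matrix.toEuclideanCLM (𝕜 := ℂ) M x‖ ^ 2
      = Complex.re (inner (𝕜 := ℂ) x (Matrix.toEuclideanCLM (𝕜 := ℂ) (Mᴴ * M) x)) := by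
  rw [_root_.map_mul]
  have h : Matrix.toEuclideanCLM (𝕜 := ℂ) Mᴴ = star (Matrix.toEuclideanCLM (𝕜 := ℂ) M) := by
    rw [← map_star]; rfl
  rw [h, ContinuousLinearMap.star_eq_adjoint, ContinuousLinearMap.mul_apply,
    ContinuousLinearMap.adjoint_inner_right, inner_self_eq_norm_sq_to_K]
  norm_cast

lemma clm_eigen (M : Matrix (Fin n) (Fin n) ℂ) (i : Fin n) :
    Matrix.toEuclideanCLM (𝕜 := ℂ) (Mᴴ * M) ((isHermitian_conjTranspose_mul_self M).eigenvectorBasis i)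
      = ((isHermitian_conjTranspose_mul_self M).eigenvalues i : ℂ) •
        ((isHermitian_conjTranspose_mul_self M).eigenvectorBasis i) := by
  set hB := isHermitian_conjTranspose_mul_self M
  apply (WithLp.equiv 2 _).injective
  simp only [euclid_apply, Equiv.apply_symm_apply]
  have := hB.mulVec_eigenvectorBasis i
  ext j
  simp only [WithLp.equiv_apply] at *
  rw [this]
  simp [Complex.real_smul]

lemma quad (M : Matrix (Fin n) (Fin n) ℂ) (x : EuclideanSpace ℂ (Fin n)) :
    ‖Matrix.toEuclideanCLM (𝕜 := ℂ) M x‖ ^ 2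
      = ∑ j, (isHermitian_conjTranspose_mul_self M).eigenvalues j *
          ‖(isHermitian_conjTranspose_mul_self M).eigenvectorBasis.repr x j‖ ^ 2 := by
  set hB := isHermitian_conjTranspose_mul_self M with hBdef
  set b := hB.eigenvectorBasis with hbdef
  set g : EuclideanSpace ℂ (Fin n) := b.repr x with hgdef
  have hx : Matrix.toEuclideanCLM (𝕜 := ℂ) (Mᴴ * M) x
      = ∑ i, (g i * (hB.eigenvalues i : ℂ)) • b i := by
    conv_lhs => rw [← b.sum_repr x, map_sum]
    refine Finset.sum_congr rfl fun i _ => ?_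
    rw [_root_.map_smul, clm_eigen, smul_smul, mul_comm]
  have hrepr : ∀ j, b.repr (Matrix.toEuclideanCLM (𝕜 := ℂ) (Mᴴ * M) x) j
      = g j * (hB.eigenvalues j : ℂ) := by
    intro j
    rw [hx, map_sum]
    simp only [_root_.map_smul, b.repr_self]
    rw [WithLp.ofLp_sum, Finset.sum_apply]
    simp [EuclideanSpace.single_apply]
  rw [norm_sq_eq]
  rw [← b.repr.inner_map_map x (Matrix.toEuclideanCLM (𝕜 := ℂ) (Mᴴ * M) x)]
  rw [PiLp.inner_apply]
  rw [Complex.re_sum]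
  refine Finset.sum_congr rfl fun j _ => ?_
  rw [hrepr j]
  simp only [RCLike.inner_apply]
  rw [← hgdef]
  rw [show g j * (hB.eigenvalues j : ℂ) * (starRingEnd ℂ) (g j)
      = (hB.eigenvalues j : ℂ) * ((starRingEnd ℂ) (g j) * g j) by ring]
  rw [Complex.conj_mul']
  norm_cast

lemma lowerB (M : Matrix (Fin n) (Fin n) ℂ) (x : EuclideanSpace ℂ (Fin n)) :
    Real.sqrt (⨅ i, (isHermitian_conjTranspose_mul_self M).eigenvalues i) * ‖x‖
      ≤ ‖Matrix.toEuclideanCLM (𝕜 := ℂ) M x‖ := by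
  set hB := isHermitian_conjTranspose_mul_self M
  set c := ⨅ i, hB.eigenvalues i with hc
  have hc0 : 0 ≤ c := Real.iInf_nonneg (eigenvalues_conjTranspose_mul_self_nonneg M)
  have hkey : c * ‖x‖ ^ 2 ≤ ‖Matrix.toEuclideanCLM (𝕜 := ℂ) M x‖ ^ 2 := by
    rw [quad]
    have hnorm : ‖x‖ ^ 2 = ∑ j, ‖hB.eigenvectorBasis.repr x j‖ ^ 2 := by
      rw [← hB.eigenvectorBasis.repr.norm_map x, EuclideanSpace.norm_eq,
        Real.sq_sqrt (Finset.sum_nonneg fun j _ => sq_nonneg _)]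
    rw [hnorm, Finset.mul_sum]
    refine Finset.sum_le_sum fun j _ => ?_
    exact mul_le_mul_of_nonneg_right (ciInf_le (Finite.bddBelow_range _) j) (sq_nonneg _)
  calc Real.sqrt c * ‖x‖ = Real.sqrt (c * ‖x‖ ^ 2) := by
        rw [Real.sqrt_mul hc0, Real.sqrt_sq (norm_nonneg _)]
    _ ≤ Real.sqrt (‖Matrix.toEuclideanCLM (𝕜 := ℂ) M x‖ ^ 2) := Real.sqrt_le_sqrt hkey
    _ = _ := Real.sqrt_sq (norm_nonneg _)

lemma attainB (hn : 1 ≤ n) (M : Matrix (Fin n) (Fin n) ℂ) :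
    ∃ x : EuclideanSpace ℂ (Fin n), ‖x‖ = 1 ∧
      ‖Matrix.toEuclideanCLM (𝕜 := ℂ) M x‖
        = Real.sqrt (⨅ i, (isHermitian_conjTranspose_mul_self M).eigenvalues i) := by
  set hB := isHermitian_conjTranspose_mul_self M
  have : Nonempty (Fin n) := ⟨⟨0, hn⟩⟩
  obtain ⟨i0, hi0⟩ := exists_eq_ciInf_of_finite (f := hB.eigenvalues)
  refine ⟨hB.eigenvectorBasis i0, hB.eigenvectorBasis.orthonormal.1 i0, ?_⟩
  have h2 : ‖Matrix.toEuclideanCLM (𝕜 := ℂ) M (hB.eigenvectorBasis i0)‖ ^ 2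
      = hB.eigenvalues i0 := by
    rw [quad]
    simp [OrthonormalBasis.repr_self, EuclideanSpace.single_apply, apply_ite]
  rw [← Real.sqrt_sq (norm_nonneg _), h2, hi0]

lemma sMin_nonneg (A : Matrix (Fin n) (Fin n) ℂ) (lam : ℂ) : 0 ≤ sMin A lam :=
  Real.sqrt_nonneg _

/-- key characterization -/
lemma mem_pseudo_iff (hn : 1 ≤ n) (A : Matrix (Fin n) (Fin n) ℂ) {δ : ℝ} (hδ : 0 ≤ δ)
    (lam : ℂ) : lam ∈ pseudospectrum δ A ↔ sMin A lam ≤ δ := by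
  set M := lam • (1 : Matrix (Fin n) (Fin n) ℂ) - A with hM
  constructor
  · rintro h
    simp only [pseudospectrum, Set.mem_iUnion, Set.mem_setOf_eq] at h
    obtain ⟨E, hE, hspec⟩ := h
    rw [spectrum.mem_iff, Algebra.algebraMap_eq_smul_one] at hspec
    rw [Matrix.isUnit_iff_isUnit_det, isUnit_iff_ne_zero, not_not] at hspec
    obtain ⟨v, hv0, hv⟩ := Matrix.exists_mulVec_eq_zero_iff.mpr hspec
    set x : EuclideanSpace ℂ (Fin n) := (WithLp.equiv 2 _).symm v with hx
    have hMv : M *ᵥ v = E *ᵥ v := by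
      have : (lam • 1 - (A + E)) *ᵥ v = M *ᵥ v - E *ᵥ v := by
        rw [hM]; rw [show lam • (1 : Matrix (Fin n) (Fin n) ℂ) - (A + E)
          = (lam • 1 - A) - E by abel, Matrix.sub_mulVec]
      rw [this] at hv
      linear_combination (norm := module) hv
    have hle : sMin A lam * ‖x‖ ≤ δ * ‖x‖ := by
      calc sMin A lam * ‖x‖ ≤ ‖Matrix.toEuclideanCLM (𝕜 := ℂ) M x‖ := lowerB M x
        _ = ‖Matrix.toEuclideanCLM (𝕜 := ℂ) E x‖ := by
            rw [euclid_apply, euclid_apply]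
            simp only [hx, Equiv.apply_symm_apply, hMv]
        _ ≤ ‖Matrix.toEuclideanCLM (𝕜 := ℂ) E‖ * ‖x‖ :=
            ContinuousLinearMap.le_opNorm _ _
        _ ≤ δ * ‖x‖ := by
            exact mul_le_mul_of_nonneg_right hE (norm_nonneg _)
    have hxpos : 0 < ‖x‖ := by
      rw [norm_pos_iff]
      simpa [hx] using hv0
    exact le_of_mul_le_mul_right hle hxpos
  · intro h
    obtain ⟨x, hx1, hxval⟩ := attainB hn M
    set v : Fin n → ℂ := WithLp.equiv 2 _ x with hv
    set u : Fin n → ℂ := M *ᵥ v with hu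
    set E : Matrix (Fin n) (Fin n) ℂ := vecMulVec u (star v) with hE
    have hEmul : ∀ w : Fin n → ℂ, E *ᵥ w = (star v ⬝ᵥ w) • u := by
      intro w
      funext i
      simp only [hE, vecMulVec, Matrix.mulVec, dotProduct, Pi.smul_apply,
        Matrix.of_apply, smul_eq_mul, Finset.sum_mul, Pi.star_apply]
      exact Finset.sum_congr rfl fun j _ => by ring
    have hs : sMin A lam = ‖Matrix.toEuclideanCLM (𝕜 := ℂ) M x‖ := hxval.symm
    have hunorm : ‖(WithLp.equiv 2 (Fin n → ℂ)).symm u‖ = sMin A lam := by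
      rw [hs, hu, hv, euclid_apply M x]
    have hinner : (star v ⬝ᵥ v : ℂ) = 1 := by
      have h1 : (inner (𝕜 := ℂ) x x) = ((‖x‖ : ℂ) ^ 2) := by
        rw [inner_self_eq_norm_sq_to_K]; norm_cast
      rw [hx1] at h1
      simp only [Complex.ofReal_one, one_pow] at h1
      rw [← h1, PiLp.inner_apply]
      simp [dotProduct, RCLike.inner_apply, hv]
      exact Finset.sum_congr rfl fun j _ => Complex.conj_mul' _
    have hEnorm : l2OpNorm E ≤ δ := by
      rw [l2OpNorm]
      refine ContinuousLinearMap.opNorm_le_bound _ hδ fun y => ?_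
      rw [euclid_apply]
      have : E *ᵥ (WithLp.equiv 2 _ y) = (star v ⬝ᵥ (WithLp.equiv 2 _ y)) • u := hEmul _
      rw [this]
      have hsmul : (WithLp.equiv 2 (Fin n → ℂ)).symm
            ((star v ⬝ᵥ (WithLp.equiv 2 _ y)) • u)
          = (star v ⬝ᵥ (WithLp.equiv 2 _ y)) • (WithLp.equiv 2 (Fin n → ℂ)).symm u := rfl
      rw [hsmul, norm_smul, hunorm]
      have hinner2 : (star v ⬝ᵥ (WithLp.equiv 2 _ y) : ℂ) = inner (𝕜 := ℂ) x y := by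
        rw [PiLp.inner_apply]
        simp [dotProduct, RCLike.inner_apply, hv]
        exact Finset.sum_congr rfl fun j _ => mul_comm _ _
      rw [hinner2]
      calc ‖(inner (𝕜 := ℂ) x y : ℂ)‖ * sMin A lam
          ≤ (‖x‖ * ‖y‖) * sMin A lam :=
            mul_le_mul_of_nonneg_right (norm_inner_le_norm x y) (sMin_nonneg A lam)
        _ = sMin A lam * ‖y‖ := by rw [hx1]; ring
        _ ≤ δ * ‖y‖ := mul_le_mul_of_nonneg_right h (norm_nonneg _)
    have hker : (lam • (1 : Matrix (Fin n) (Fin n) ℂ) - (A + E)) *ᵥ v = 0 := by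
      rw [show lam • (1 : Matrix (Fin n) (Fin n) ℂ) - (A + E) = M - E by rw [hM]; abel,
        Matrix.sub_mulVec, hEmul, hinner, one_smul, ← hu, sub_self]
    have hv0 : v ≠ 0 := by
      intro h0
      apply one_ne_zero (α := ℝ)
      rw [← hx1]
      have : x = 0 := by
        apply (WithLp.equiv 2 (Fin n → ℂ)).injective
        simpa [hv] using h0
      simp [this]
    simp only [pseudospectrum, Set.mem_iUnion, Set.mem_setOf_eq]
    refine ⟨E, hEnorm, ?_⟩
    rw [spectrum.mem_iff, Algebra.algebraMap_eq_smul_one,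
      Matrix.isUnit_iff_isUnit_det, isUnit_iff_ne_zero, not_not]
    rw [← Matrix.exists_mulVec_eq_zero_iff]
    exact ⟨v, hv0, hker⟩

lemma sMin_lipschitz (A : Matrix (Fin n) (Fin n) ℂ) (hn : 1 ≤ n) :
    LipschitzWith 1 (sMin A) := by
  have key : ∀ lam mu : ℂ, sMin A lam ≤ sMin A mu + ‖lam - mu‖ := by
    intro lam mu
    obtain ⟨x, hx1, hxval⟩ := attainB hn (mu • (1 : Matrix (Fin n) (Fin n) ℂ) - A)
    have h1 : sMin A lam * ‖x‖ ≤
        ‖Matrix.toEuclideanCLM (𝕜 := ℂ) (lam • (1 : Matrix (Fin n) (Fin n) ℂ) - A) x‖ :=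
      lowerB _ x
    rw [hx1, mul_one] at h1
    refine h1.trans ?_
    have hsplit : (lam • (1 : Matrix (Fin n) (Fin n) ℂ) - A)
        = (mu • (1 : Matrix (Fin n) (Fin n) ℂ) - A) + (lam - mu) • 1 := by module
    rw [hsplit, map_add, ContinuousLinearMap.add_apply]
    refine (norm_add_le _ _).trans ?_
    have hle1 : ‖Matrix.toEuclideanCLM (𝕜 := ℂ) (mu • (1 : Matrix (Fin n) (Fin n) ℂ) - A) x‖
        ≤ sMin A mu := le_of_eq hxval
    gcongr
    have : Matrix.toEuclideanCLM (𝕜 := ℂ) ((lam - mu) • (1 : Matrix (Fin n) (Fin n) ℂ)) x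
        = (lam - mu) • x := by
      rw [_root_.map_smul, _root_.map_one]
      rfl
    rw [this, norm_smul, hx1, mul_one]
  refine LipschitzWith.of_dist_le_mul fun lam mu => ?_
  rw [NNReal.coe_one, one_mul, Real.dist_eq, abs_sub_le_iff]
  constructor
  · have := key lam mu
    have h2 : dist lam mu = ‖lam - mu‖ := dist_eq_norm lam mu
    rw [dist_eq_norm]
    linarith [key lam mu]
  · rw [dist_eq_norm]
    have := key mu lam
    rw [show ‖mu - lam‖ = ‖lam - mu‖ by rw [norm_sub_rev]] at this
    linarith

end PseudoAux

/-- Every point on the topological boundary of the δ-pseudospectrum satisfies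
`s_n(λ) = δ`, where `s_n(λ)` is the smallest singular value of `λI - A`. -/
theorem frontier_pseudospectrum_sMin_eq
    {n : ℕ} (hn : 1 ≤ n) (A : Matrix (Fin n) (Fin n) ℂ) (δ : ℝ) (hδ : 0 < δ) :
    ∀ lam ∈ frontier (pseudospectrum δ A), sMin A lam = δ := by
  intro lam hlam
  have hset : pseudospectrum δ A = sMin A ⁻¹' Set.Iic δ := by
    ext mu
    exact PseudoAux.mem_pseudo_iff hn A hδ.le mu
  have hcont : Continuous (sMin A) := (PseudoAux.sMin_lipschitz A hn).continuous
  have := hcont.frontier_preimage_subset (Set.Iic δ)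
  rw [hset] at hlam
  have h2 := this hlam
  rw [frontier_Iic] at h2
  exact h2
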